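/- Let (a_1,...,a_r) and (b_1,...,b_s) be two nondecreasing sequences of prime numbers. If the product over i of (1 - 1/a_i) equals the product over j of (1 - 1/b_j), then r = s and a_i = b_i for all i. -/

import Mathlib

private lemma fpos {p : ℕ} (hp : p.Prime) : 0 < 1 - 1 / (p : ℚ) := by
  have h2 : (2 : ℚ) ≤ p := by exact_mod_cast hp.two_le
  have : 1 / (p : ℚ) ≤ 1 / 2 := by
    apply one_div_le_one_div_of_le <;> linarith
  linarith

private lemma flt1 {p : ℕ} (hp : p.Prime) : 1 - 1 / (p : ℚ) < 1 := by
  have h2 : (2 : ℚ) ≤ p := by exact_mod_cast hp.two_le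
  have : 0 < 1 / (p : ℚ) := by positivity
  linarith

private lemma prod_pos' (L : List ℕ) (hL : ∀ p ∈ L, Nat.Prime p) :
    0 < (L.map (fun p : ℕ => 1 - 1 / (p : ℚ))).prod := by
  apply List.prod_pos
  intro x hx
  obtain ⟨p, hp, rfl⟩ := List.mem_map.mp hx
  exact fpos (hL p hp)

private lemma prod_le_one' (L : List ℕ) (hL : ∀ p ∈ L, Nat.Prime p) :
    (L.map (fun p : ℕ => 1 - 1 / (p : ℚ))).prod ≤ 1 := by
  induction L with
  | nil => simp
  | cons a t ih =>
    simp only [List.map_cons, List.prod_cons]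
    have h1 := fpos (hL a (by simp))
    have h2 := flt1 (hL a (by simp))
    have h3 := ih (fun p hp => hL p (by simp [hp]))
    have h4 := prod_pos' t (fun p hp => hL p (by simp [hp]))
    nlinarith

private lemma prod_lt_one' (L : List ℕ) (hL : ∀ p ∈ L, Nat.Prime p) (hne : L ≠ []) :
    (L.map (fun p : ℕ => 1 - 1 / (p : ℚ))).prod < 1 := by
  obtain ⟨a, t, rfl⟩ := List.exists_cons_of_ne_nil hne
  simp only [List.map_cons, List.prod_cons]
  have h1 := fpos (hL a (by simp))
  have h2 := flt1 (hL a (by simp))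
  have h3 := prod_le_one' t (fun p hp => hL p (by simp [hp]))
  have h4 := prod_pos' t (fun p hp => hL p (by simp [hp]))
  nlinarith

private lemma cast_prod (L : List ℕ) (hL : ∀ p ∈ L, Nat.Prime p) :
    (L.map (fun p : ℕ => 1 - 1 / (p : ℚ))).prod
      = (((L.map (fun p => p - 1)).prod : ℕ) : ℚ) / ((L.prod : ℕ) : ℚ) := by
  induction L with
  | nil => simp
  | cons a t ih =>
    have ha := hL a (by simp)
    have h1 : (1 : ℕ) ≤ a := ha.one_lt.le
    have ha0 : (a : ℚ) ≠ 0 := by exact_mod_cast ha.pos.ne'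
    simp only [List.map_cons, List.prod_cons]
    rw [ih (fun p hp => hL p (by simp [hp]))]
    rw [Nat.cast_mul, Nat.cast_mul, Nat.cast_sub h1]
    rw [← div_mul_div_comm]
    congr 1
    field_simp
    simp

private lemma le_getLast' {l : List ℕ} (hs : l.Pairwise (· ≤ ·)) {x : ℕ} (hx : x ∈ l)
    (h : l ≠ []) : x ≤ l.getLast h := by
  have hdec := (List.dropLast_append_getLast h)
  rw [← hdec] at hs hx
  rcases List.pairwise_append.mp hs with ⟨-, -, hrel⟩
  rcases List.mem_append.mp hx with h1 | h1
  · exact hrel x h1 _ (by simp)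
  · simp at h1; omega

private lemma last_mem_other (L M : List ℕ) (hL : ∀ p ∈ L, Nat.Prime p)
    (hM : ∀ p ∈ M, Nat.Prime p) (hMs : M.Pairwise (· ≤ ·)) (hMne : M ≠ [])
    (hnat : (L.map (fun p => p - 1)).prod * M.prod = (M.map (fun p => p - 1)).prod * L.prod) :
    M.getLast hMne ∈ L := by
  set b := M.getLast hMne with hb_def
  have hbM : b ∈ M := List.getLast_mem hMne
  have hb : b.Prime := hM b hbM
  have h1 : b ∣ (L.map (fun p => p - 1)).prod * M.prod := (List.dvd_prod hbM).mul_left _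
  rw [hnat] at h1
  rcases (Nat.Prime.dvd_mul hb).mp h1 with h2 | h2
  · exfalso
    obtain ⟨x, hx, hdvd⟩ := hb.prime.dvd_prod_iff.mp h2
    obtain ⟨p, hp, rfl⟩ := List.mem_map.mp hx
    have hple : p ≤ b := le_getLast' hMs hp hMne
    have hp2 : 2 ≤ p := (hM p hp).two_le
    have := Nat.le_of_dvd (by omega) hdvd
    omega
  · obtain ⟨p, hp, hdvd⟩ := hb.prime.dvd_prod_iff.mp h2
    have : b = p := (Nat.prime_dvd_prime_iff_eq hb (hL p hp)).mp hdvd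
    rwa [this]

private lemma key : ∀ n (L M : List ℕ), L.length ≤ n →
    (∀ p ∈ L, Nat.Prime p) → (∀ p ∈ M, Nat.Prime p) →
    L.Pairwise (· ≤ ·) → M.Pairwise (· ≤ ·) →
    (L.map (fun p : ℕ => 1 - 1 / (p : ℚ))).prod = (M.map (fun p : ℕ => 1 - 1 / (p : ℚ))).prod →
    L = M := by
  intro n
  induction n with
  | zero =>
    intro L M hlen hL hM hLs hMs h
    have hLnil : L = [] := List.length_eq_zero_iff.mp (Nat.le_zero.mp hlen)
    subst hLnil
    by_contra hMne
    have hne : M ≠ [] := fun hn => hMne hn.symm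
    have := prod_lt_one' M hM hne
    simp only [List.map_nil, List.prod_nil] at h
    linarith
  | succ n ih =>
    intro L M hlen hL hM hLs hMs h
    rcases eq_or_ne L [] with rfl | hLne
    · by_contra hMne
      have hne : M ≠ [] := fun hn => hMne hn.symm
      have := prod_lt_one' M hM hne
      simp only [List.map_nil, List.prod_nil] at h
      linarith
    rcases eq_or_ne M [] with rfl | hMne
    · exfalso
      have := prod_lt_one' L hL hLne
      simp only [List.map_nil, List.prod_nil] at h
      linarith
    -- derive the natural-number equation
    have hPL : (0:ℕ) < L.prod := List.prod_pos (fun p hp => (hL p hp).pos)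
    have hPM : (0:ℕ) < M.prod := List.prod_pos (fun p hp => (hM p hp).pos)
    have hPL0 : ((L.prod : ℕ) : ℚ) ≠ 0 := by exact_mod_cast hPL.ne'
    have hPM0 : ((M.prod : ℕ) : ℚ) ≠ 0 := by exact_mod_cast hPM.ne'
    have hq : (((L.map (fun p => p - 1)).prod : ℕ) : ℚ) / L.prod
        = (((M.map (fun p => p - 1)).prod : ℕ) : ℚ) / M.prod := by
      rw [← cast_prod L hL, ← cast_prod M hM]; exact h
    have hq2 : (((L.map (fun p => p - 1)).prod : ℕ) : ℚ) * M.prod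
        = (((M.map (fun p => p - 1)).prod : ℕ) : ℚ) * L.prod :=
      (div_eq_div_iff hPL0 hPM0).mp hq
    have hnat : (L.map (fun p => p - 1)).prod * M.prod
        = (M.map (fun p => p - 1)).prod * L.prod := by exact_mod_cast hq2
    have hnat' : (M.map (fun p => p - 1)).prod * L.prod
        = (L.map (fun p => p - 1)).prod * M.prod := hnat.symm
    -- last elements are equal
    set a := L.getLast hLne with ha_def
    set b := M.getLast hMne with hb_def
    have hbL : b ∈ L := last_mem_other L M hL hM hMs hMne hnat
    have haM : a ∈ M := last_mem_other M L hM hL hLs hLne hnat'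
    have hab : a = b := le_antisymm (le_getLast' hMs haM hMne) (le_getLast' hLs hbL hLne)
    -- peel off the last element
    have hLd := List.dropLast_append_getLast hLne
    have hMd := List.dropLast_append_getLast hMne
    rw [← hLd, ← hMd] at h
    simp only [List.map_append, List.prod_append, List.map_cons, List.map_nil,
      List.prod_cons, List.prod_nil, mul_one] at h
    rw [← ha_def, ← hb_def, ← hab] at h
    have hfa : (1 - 1 / (a : ℚ)) ≠ 0 := (fpos (hL a (hLd ▸ (by simp [ha_def])))).ne'
    have h' := mul_right_cancel₀ hfa h
    have hlen' : L.dropLast.length ≤ n := by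
      have : L.dropLast.length = L.length - 1 := List.length_dropLast
      have hl1 : 1 ≤ L.length := List.length_pos_iff.mpr hLne
      omega
    have heq := ih L.dropLast M.dropLast hlen'
      (fun p hp => hL p (List.dropLast_subset L hp))
      (fun p hp => hM p (List.dropLast_subset M hp))
      (hLs.sublist (List.dropLast_sublist L))
      (hMs.sublist (List.dropLast_sublist M)) h'
    simp only [ha_def, hb_def] at hab
    rw [← hLd, ← hMd, heq, hab]

theorem stmt_0 (L M : List ℕ) (hL : ∀ p ∈ L, Nat.Prime p) (hM : ∀ p ∈ M, Nat.Prime p)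
    (hLs : L.Pairwise (· ≤ ·)) (hMs : M.Pairwise (· ≤ ·))
    (h : (L.map (fun p => 1 - 1 / (p : ℚ))).prod = (M.map (fun p => 1 - 1 / (p : ℚ))).prod) :
    L = M := by
  simp only [bind_pure_comp, List.map_eq_map, List.map_map, Function.comp_def] at h
  exact key L.length L M le_rfl hL hM hLs hMs h
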